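/- Let A, B ∈ ℂ with conj(A)·B = −(1 + |A|²), and φ_0 = A + B, φ_n = B for n ≥ 1, with induced inner product ⟨·,·⟩_b on polynomials. Then A ≠ 0, ‖1‖_b² = 1 + 1/|A|², and for every n ≥ 1, ‖z^{n−1}(z−1)‖_b² = (|A| + 1/|A|)². -/

import Mathlib

open Finset Polynomial Complex

noncomputable def dbInner (φ : ℕ → ℂ) (j k : ℕ) : ℂ :=
  (if j = k then 1 else 0) +
    if j ≤ k then ∑ s ∈ Finset.range (j + 1), (starRingEnd ℂ) (φ s) * φ (k - j + s)
    else ∑ s ∈ Finset.range (k + 1), φ s * (starRingEnd ℂ) (φ (j - k + s))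

noncomputable def polyInner (φ : ℕ → ℂ) (p q : Polynomial ℂ) : ℂ :=
  ∑ j ∈ p.support, ∑ k ∈ q.support, p.coeff j * (starRingEnd ℂ) (q.coeff k) * dbInner φ j k

/-- If conj(A)B = -(1+|A|²) then A ≠ 0, ‖1‖_b² = 1 + 1/|A|², and
‖z^{n-1}(z-1)‖_b² = (|A| + 1/|A|)² for all n ≥ 1. -/
theorem stmt4 (A B : ℂ) (h : (starRingEnd ℂ) A * B = -(1 + (‖A‖ : ℂ) ^ 2)) :
    A ≠ 0 ∧
    polyInner (fun n => if n = 0 then A + B else B) 1 1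
      = ((1 + 1 / ‖A‖ ^ 2 : ℝ) : ℂ) ∧
    ∀ n : ℕ, 1 ≤ n →
      polyInner (fun n => if n = 0 then A + B else B)
          (X ^ (n - 1) * (X - 1)) (X ^ (n - 1) * (X - 1))
        = (((‖A‖ + 1 / ‖A‖) ^ 2 : ℝ) : ℂ) := by
  have hA : A ≠ 0 := by
    intro h0
    rw [h0] at h
    simp at h
  have habs : ‖A‖ ≠ 0 := by simpa using hA
  have hA' : (starRingEnd ℂ) A ≠ 0 := by simpa using hA
  have hc : ((‖A‖ : ℂ)) ^ 2 = A * (starRingEnd ℂ) A := by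
    rw [Complex.mul_conj, Complex.normSq_eq_norm_sq]
    push_cast
    ring
  have hB : B = -1 / (starRingEnd ℂ) A - A := by
    field_simp
    linear_combination h - hc
  have hB' : (starRingEnd ℂ) B = -1 / A - (starRingEnd ℂ) A := by
    have := congrArg (starRingEnd ℂ) hB
    simpa using this
  refine ⟨hA, ?_, ?_⟩
  · have hs1 : (1 : Polynomial ℂ).support = {0} := by
      rw [show (1 : Polynomial ℂ) = C 1 from (map_one C).symm, Polynomial.support_C one_ne_zero]
    rw [polyInner, hs1]
    simp only [Finset.sum_singleton, Polynomial.coeff_one_zero, dbInner, if_pos rfl,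
      if_pos le_rfl, Nat.sub_self, Nat.zero_add, Finset.sum_range_one, map_one, one_mul]
    rw [hB]
    have hr : ((1 + 1 / ‖A‖ ^ 2 : ℝ) : ℂ) = 1 + 1 / (A * (starRingEnd ℂ) A) := by
      push_cast
      rw [hc]
    rw [hr]
    simp only [if_true, map_add, map_sub, map_div₀, map_neg, map_one, Complex.conj_conj]
    field_simp
    ring
  · intro n hn
    obtain ⟨m, rfl⟩ : ∃ m, n = m + 1 := ⟨n - 1, by omega⟩
    have hm1 : m + 1 - 1 = m := rfl
    have hp : (X ^ (m + 1 - 1) * (X - 1) : Polynomial ℂ) = X ^ (m + 1) - X ^ m := by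
      rw [hm1]; ring
    have hsupp : (X ^ (m + 1) - X ^ m : Polynomial ℂ).support = {m + 1, m} := by
      have h2 : (X ^ (m + 1) - X ^ m : Polynomial ℂ) = C 1 * X ^ (m + 1) + C (-1) * X ^ m := by
        simp; ring
      rw [h2, Polynomial.support_binomial (by omega) one_ne_zero (neg_ne_zero.2 one_ne_zero)]
    have c1 : (X ^ (m + 1) - X ^ m : Polynomial ℂ).coeff (m + 1) = 1 := by
      simp [coeff_X_pow]
    have c2 : (X ^ (m + 1) - X ^ m : Polynomial ℂ).coeff m = -1 := by
      simp [coeff_X_pow, Nat.succ_ne_self]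
    have key1 : ∀ j : ℕ, (∑ s ∈ Finset.range (j + 1),
        (starRingEnd ℂ) (if s = 0 then A + B else B) * (if s = 0 then A + B else B))
        = (starRingEnd ℂ) (A + B) * (A + B) + (j : ℂ) * ((starRingEnd ℂ) B * B) := by
      intro j
      rw [Finset.sum_range_succ']
      simp [Nat.succ_ne_zero, Finset.sum_const, mul_comm]
      ring
    have key2 : ∀ j : ℕ, (∑ s ∈ Finset.range (j + 1),
        (starRingEnd ℂ) (if s = 0 then A + B else B) * (if 1 + s = 0 then A + B else B))
        = (starRingEnd ℂ) (A + B) * B + (j : ℂ) * ((starRingEnd ℂ) B * B) := by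
      intro j
      rw [Finset.sum_range_succ']
      simp [Nat.succ_ne_zero, Finset.sum_const, mul_comm]
      ring
    have key3 : ∀ j : ℕ, (∑ s ∈ Finset.range (j + 1),
        (if s = 0 then A + B else B) * (starRingEnd ℂ) (if 1 + s = 0 then A + B else B))
        = (A + B) * (starRingEnd ℂ) B + (j : ℂ) * (B * (starRingEnd ℂ) B) := by
      intro j
      rw [Finset.sum_range_succ']
      simp [Nat.succ_ne_zero, Finset.sum_const, mul_comm]
      ring
    have e1 : dbInner (fun n => if n = 0 then A + B else B) (m + 1) (m + 1)
        = 1 + ((starRingEnd ℂ) (A + B) * (A + B) + ((m : ℂ) + 1) * ((starRingEnd ℂ) B * B)) := by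
      rw [dbInner, if_pos rfl, if_pos le_rfl]
      simp only [Nat.sub_self, Nat.zero_add]
      rw [key1 (m + 1)]
      push_cast
      ring
    have e2 : dbInner (fun n => if n = 0 then A + B else B) m m
        = 1 + ((starRingEnd ℂ) (A + B) * (A + B) + (m : ℂ) * ((starRingEnd ℂ) B * B)) := by
      rw [dbInner, if_pos rfl, if_pos le_rfl]
      simp only [Nat.sub_self, Nat.zero_add]
      rw [key1 m]
    have e3 : dbInner (fun n => if n = 0 then A + B else B) m (m + 1)
        = (starRingEnd ℂ) (A + B) * B + (m : ℂ) * ((starRingEnd ℂ) B * B) := by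
      rw [dbInner, if_neg (by omega), if_pos (by omega)]
      simp only [show m + 1 - m = 1 from by omega]
      rw [key2 m, zero_add]
    have e4 : dbInner (fun n => if n = 0 then A + B else B) (m + 1) m
        = (A + B) * (starRingEnd ℂ) B + (m : ℂ) * (B * (starRingEnd ℂ) B) := by
      rw [dbInner, if_neg (by omega), if_neg (by omega)]
      simp only [show m + 1 - m = 1 from by omega]
      rw [key3 m, zero_add]
    rw [polyInner, hp, hsupp]
    simp only [Finset.sum_insert (show (m + 1) ∉ ({m} : Finset ℕ) by simp),
      Finset.sum_singleton, c1, c2, e1, e2, e3, e4, map_one, map_neg]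
    have hr : (((‖A‖ + 1 / ‖A‖) ^ 2 : ℝ) : ℂ)
        = A * (starRingEnd ℂ) A + 2 + 1 / (A * (starRingEnd ℂ) A) := by
      have h1 : (‖A‖ + 1 / ‖A‖) ^ 2
          = ‖A‖ ^ 2 + 2 + 1 / ‖A‖ ^ 2 := by
        field_simp
        ring
      rw [h1]
      push_cast
      rw [hc]
    rw [hr, hB]
    simp only [map_add, map_sub, map_div₀, map_neg, map_one, Complex.conj_conj, map_one]
    field_simp
    ring
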